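/- If m ≥ 0 and 2^(m+1) ≤ k, then t^(2^m)(e_{2^(m+1)}) = Σ_{i=0}^{m+1} e_{2^i} = e₁ + e₂ + e₄ + ⋯ + e_{2^(m+1)}. -/

import Mathlib

/-- The `j`-th standard basis vector of `(ZMod 2)^k`, 1-indexed; by convention it is `0`
for `j = 0` (and for `j > k`). -/
def eVec (k j : ℕ) : Fin k → ZMod 2 := fun i => if (i : ℕ) + 1 = j then 1 else 0

/-- The involution `s₁`, defined on the standard basis by `s₁ e_j = e_j + e_{j-1}` if
`j ≡ k (mod 2)` and `s₁ e_j = e_j` otherwise. -/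
noncomputable def sOne (k : ℕ) : Module.End (ZMod 2) (Fin k → ZMod 2) :=
  (Pi.basisFun (ZMod 2) (Fin k)).constr (ZMod 2) fun i =>
    if ((i : ℕ) + 1) % 2 = k % 2 then eVec k ((i : ℕ) + 1) + eVec k (i : ℕ)
    else eVec k ((i : ℕ) + 1)

/-- The involution `s₂`, defined on the standard basis by `s₂ e_j = e_j + e_{j-1}` if
`j ≢ k (mod 2)` and `s₂ e_j = e_j` otherwise. -/
noncomputable def sTwo (k : ℕ) : Module.End (ZMod 2) (Fin k → ZMod 2) :=
  (Pi.basisFun (ZMod 2) (Fin k)).constr (ZMod 2) fun i =>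
    if ((i : ℕ) + 1) % 2 ≠ k % 2 then eVec k ((i : ℕ) + 1) + eVec k (i : ℕ)
    else eVec k ((i : ℕ) + 1)

/-- `t = s₂ ∘ s₁`. -/
noncomputable def tEnd (k : ℕ) : Module.End (ZMod 2) (Fin k → ZMod 2) :=
  sTwo k * sOne k


namespace Aux

/-- The down-shift `D e_j = e_{j-1}`. -/
def Dmap (k : ℕ) : Module.End (ZMod 2) (Fin k → ZMod 2) where
  toFun x := fun i => if h : (i : ℕ) + 1 < k then x ⟨(i : ℕ) + 1, h⟩ else 0
  map_add' x y := by funext i; by_cases h : (i : ℕ) + 1 < k <;> simp [h]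
  map_smul' c x := by funext i; by_cases h : (i : ℕ) + 1 < k <;> simp [h]

/-- The projection onto coordinates `j ≡ k (mod 2)`. -/
def Pmap (k : ℕ) : Module.End (ZMod 2) (Fin k → ZMod 2) where
  toFun x := fun i => if ((i : ℕ) + 1) % 2 = k % 2 then x i else 0
  map_add' x y := by funext i; by_cases h : ((i : ℕ) + 1) % 2 = k % 2 <;> simp [h]
  map_smul' c x := by funext i; by_cases h : ((i : ℕ) + 1) % 2 = k % 2 <;> simp [h]

variable {k : ℕ}

lemma eVec_zero : eVec k 0 = 0 := by
  funext i; simp [eVec]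

lemma D_eVec {j : ℕ} (hj : j ≤ k) : Dmap k (eVec k j) = eVec k (j - 1) := by
  funext i
  simp only [Dmap, LinearMap.coe_mk, AddHom.coe_mk, eVec]
  split
  · exact if_congr (by omega) rfl rfl
  · rw [if_neg (by omega)]

lemma Dpow_eVec (n : ℕ) : ∀ {j : ℕ}, j ≤ k →
    (Dmap k ^ n) (eVec k j) = eVec k (j - n) := by
  induction n with
  | zero => intro j hj; simp
  | succ n ih =>
    intro j hj
    rw [pow_succ, Module.End.mul_apply, D_eVec hj, ih (by omega),
      show j - 1 - n = j - (n + 1) by omega]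

lemma P_eVec (j : ℕ) :
    Pmap k (eVec k j) = if j % 2 = k % 2 then eVec k j else 0 := by
  funext i
  by_cases hj : j % 2 = k % 2
  · rw [if_pos hj]
    show (if ((i : ℕ) + 1) % 2 = k % 2 then eVec k j i else 0) = eVec k j i
    by_cases hij : (i : ℕ) + 1 = j
    · rw [if_pos (by omega)]
    · have h0 : eVec k j i = 0 := by simp [eVec, hij]
      rw [h0]; split <;> rfl
  · rw [if_neg hj]
    show (if ((i : ℕ) + 1) % 2 = k % 2 then eVec k j i else 0) = (0 : Fin k → ZMod 2) i
    by_cases hij : (i : ℕ) + 1 = j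
    · rw [if_neg (by omega)]; rfl
    · have h0 : eVec k j i = 0 := by simp [eVec, hij]
      rw [h0]; split <;> rfl

lemma addSelf (x : Module.End (ZMod 2) (Fin k → ZMod 2)) : x + x = 0 := by
  rw [← two_smul (ZMod 2) x, show (2 : ZMod 2) = 0 from rfl, zero_smul]

lemma P_idem : Pmap k * Pmap k = Pmap k := by
  refine LinearMap.ext fun x => funext fun i => ?_
  show (if ((i : ℕ) + 1) % 2 = k % 2 then
      (if ((i : ℕ) + 1) % 2 = k % 2 then x i else 0) else 0)
      = (if ((i : ℕ) + 1) % 2 = k % 2 then x i else 0)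
  split <;> simp_all

lemma P_mul_D : Pmap k * Dmap k = Dmap k + Dmap k * Pmap k := by
  refine LinearMap.ext fun x => funext fun i => ?_
  have hL : (Pmap k * Dmap k) x i
      = (if ((i : ℕ) + 1) % 2 = k % 2 then
          (if h : (i : ℕ) + 1 < k then x ⟨(i : ℕ) + 1, h⟩ else 0) else 0) := rfl
  have hR : (Dmap k + Dmap k * Pmap k) x i
      = (if h : (i : ℕ) + 1 < k then x ⟨(i : ℕ) + 1, h⟩ else 0)
        + (if h : (i : ℕ) + 1 < k then
            (if ((i : ℕ) + 1 + 1) % 2 = k % 2 then x ⟨(i : ℕ) + 1, h⟩ else 0) else 0) := rfl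
  rw [hL, hR]
  by_cases h : (i : ℕ) + 1 < k
  · simp only [dif_pos h]
    by_cases hp : ((i : ℕ) + 1) % 2 = k % 2
    · rw [if_pos hp, if_neg (by omega), add_zero]
    · rw [if_neg hp, if_pos (by omega), CharTwo.add_self_eq_zero]
  · simp only [dif_neg h, add_zero]
    split <;> rfl


lemma P_comm_D2 : Commute (Pmap k) (Dmap k ^ 2) := by
  show Pmap k * Dmap k ^ 2 = Dmap k ^ 2 * Pmap k
  rw [sq, ← mul_assoc, P_mul_D, add_mul, mul_assoc, P_mul_D, mul_add, ← mul_assoc,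
    ← add_assoc, addSelf, zero_add, mul_assoc]

lemma P_mul_Dpow_even {n : ℕ} (hn : n % 2 = 0) :
    Pmap k * Dmap k ^ n = Dmap k ^ n * Pmap k := by
  obtain ⟨l, rfl⟩ : ∃ l, n = 2 * l := ⟨n / 2, by omega⟩
  rw [pow_mul]
  exact (P_comm_D2.pow_right l).eq

lemma P_mul_Dpow_odd {n : ℕ} (hn : n % 2 = 1) :
    Pmap k * Dmap k ^ n = Dmap k ^ n + Dmap k ^ n * Pmap k := by
  obtain ⟨l, rfl⟩ : ∃ l, n = 2 * l + 1 := ⟨n / 2, by omega⟩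
  rw [pow_succ, ← mul_assoc, P_mul_Dpow_even (by omega), mul_assoc, P_mul_D, mul_add,
    ← pow_succ, ← mul_assoc, ← pow_succ]

lemma basisFun_eq (i : Fin k) :
    (Pi.basisFun (ZMod 2) (Fin k)) i = eVec k ((i : ℕ) + 1) := by
  funext l
  rw [Pi.basisFun_apply]
  by_cases h : l = i
  · subst h; simp [eVec]
  · rw [Pi.single_apply, if_neg h]
    have : (l : ℕ) + 1 ≠ (i : ℕ) + 1 := fun hc => h (Fin.ext (by omega))
    simp [eVec, this]
    omega

lemma vecAddSelf (v : Fin k → ZMod 2) : v + v = 0 := by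
  funext i; exact CharTwo.add_self_eq_zero _

lemma sOne_eq : sOne k = 1 + Dmap k * Pmap k := by
  apply (Pi.basisFun (ZMod 2) (Fin k)).ext
  intro i
  rw [sOne, Module.Basis.constr_basis, basisFun_eq, LinearMap.add_apply, Module.End.one_apply,
    Module.End.mul_apply, P_eVec]
  have hik : (i : ℕ) + 1 ≤ k := i.isLt
  by_cases h : ((i : ℕ) + 1) % 2 = k % 2
  · rw [if_pos h, if_pos h, D_eVec hik, Nat.add_sub_cancel]
  · rw [if_neg h, if_neg h, map_zero, add_zero]

lemma sTwo_eq : sTwo k = 1 + Dmap k + Dmap k * Pmap k := by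
  apply (Pi.basisFun (ZMod 2) (Fin k)).ext
  intro i
  rw [sTwo, Module.Basis.constr_basis, basisFun_eq, LinearMap.add_apply, LinearMap.add_apply,
    Module.End.one_apply, Module.End.mul_apply, P_eVec]
  have hik : (i : ℕ) + 1 ≤ k := i.isLt
  by_cases h : ((i : ℕ) + 1) % 2 = k % 2
  · rw [if_neg (by simpa using h), if_pos h, D_eVec hik, Nat.add_sub_cancel, add_assoc,
      vecAddSelf, add_zero]
  · rw [if_pos (by simpa using h), if_neg h, map_zero, add_zero, D_eVec hik,
      Nat.add_sub_cancel]

lemma tEnd_eq : tEnd k = 1 + Dmap k + Dmap k ^ 2 * Pmap k := by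
  rw [tEnd, sOne_eq, sTwo_eq]
  have key : Pmap k * (Dmap k * Pmap k) = 0 := by
    rw [← mul_assoc, P_mul_D, add_mul, mul_assoc, P_idem, addSelf]
  have expand : (1 + Dmap k + Dmap k * Pmap k) * (1 + Dmap k * Pmap k)
      = 1 + Dmap k + Dmap k * Dmap k * Pmap k + (Dmap k * Pmap k + Dmap k * Pmap k)
        + Dmap k * (Pmap k * (Dmap k * Pmap k)) := by noncomm_ring
  rw [expand, key, addSelf, mul_zero, add_zero, add_zero, sq]

/-- The polynomial `∑_{j=0}^{m} X^(2^(m+1) - 2^j)` over `F₂`. -/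
noncomputable def cpoly (m : ℕ) : Polynomial (ZMod 2) :=
  ∑ j ∈ Finset.range (m + 1), Polynomial.X ^ (2 ^ (m + 1) - 2 ^ j)

lemma cpoly_succ (m : ℕ) :
    cpoly (m + 1) = cpoly m ^ 2 + Polynomial.X ^ (2 ^ (m + 2) - 1) := by
  rw [cpoly, cpoly, Finset.sum_range_succ']
  congr 1
  · rw [CharTwo.sum_sq]
    refine Finset.sum_congr rfl fun j hj => ?_
    rw [← pow_mul]
    congr 1
    have hj' : j ≤ m := by simpa using Nat.lt_succ_iff.mp (Finset.mem_range.mp hj)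
    have h1 : 2 ^ j ≤ 2 ^ (m + 1) := Nat.pow_le_pow_right (by norm_num) (by omega)
    have h2 : 2 ^ (j + 1) = 2 * 2 ^ j := by ring
    have h3 : 2 ^ (m + 2) = 2 * 2 ^ (m + 1) := by ring
    omega

/-- `C_m = ∑_{j=0}^{m} D^(2^(m+1) - 2^j)`. -/
noncomputable def Cop (k m : ℕ) : Module.End (ZMod 2) (Fin k → ZMod 2) :=
  Polynomial.aeval (Dmap k) (cpoly m)

lemma Cop_eq_sum (m : ℕ) :
    Cop k m = ∑ j ∈ Finset.range (m + 1), Dmap k ^ (2 ^ (m + 1) - 2 ^ j) := by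
  rw [Cop, cpoly, map_sum]
  refine Finset.sum_congr rfl fun j _ => ?_
  rw [map_pow, Polynomial.aeval_X]

lemma Cop_succ (m : ℕ) :
    Cop k (m + 1) = Cop k m ^ 2 + Dmap k ^ (2 ^ (m + 2) - 1) := by
  rw [Cop, cpoly_succ, map_add, map_pow, map_pow, Polynomial.aeval_X, Cop]

lemma commute_D_Cop (n m : ℕ) : Commute (Dmap k ^ n) (Cop k m) := by
  rw [Cop_eq_sum]
  exact Commute.sum_right _ _ _ fun j _ => (Commute.refl (Dmap k)).pow_pow _ _

lemma P_mul_Cop (m : ℕ) :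
    Pmap k * Cop k m = Cop k m * Pmap k + Dmap k ^ (2 ^ (m + 1) - 1) := by
  have h3 : 2 ^ (m + 1) = 2 * 2 ^ m := by ring
  rw [Cop_eq_sum, Finset.mul_sum, Finset.sum_mul, Finset.sum_range_succ',
    Finset.sum_range_succ']
  have hterm : ∀ j ∈ Finset.range m,
      Pmap k * Dmap k ^ (2 ^ (m + 1) - 2 ^ (j + 1))
        = Dmap k ^ (2 ^ (m + 1) - 2 ^ (j + 1)) * Pmap k := by
    intro j hj
    have hj' : j < m := Finset.mem_range.mp hj
    have h1 : 2 ^ (j + 1) ≤ 2 ^ (m + 1) := Nat.pow_le_pow_right (by norm_num) (by omega)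
    have h2 : 2 ^ (j + 1) = 2 * 2 ^ j := by ring
    exact P_mul_Dpow_even (by omega)
  rw [Finset.sum_congr rfl hterm, pow_zero,
    P_mul_Dpow_odd (n := 2 ^ (m + 1) - 1)
      (by have h0 : 1 ≤ 2 ^ (m + 1) := Nat.one_le_two_pow; omega)]
  abel

lemma tpow_eq (m : ℕ) :
    tEnd k ^ 2 ^ m = 1 + Cop k m + Dmap k ^ 2 ^ (m + 1) * Pmap k := by
  induction m with
  | zero =>
    have h0 : Cop k 0 = Dmap k := by
      rw [Cop_eq_sum]
      norm_num
    rw [pow_zero, pow_one, tEnd_eq, h0]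
    norm_num
  | succ m ih =>
    have hsucc : (2 : ℕ) ^ (m + 1) = 2 ^ m * 2 := by ring
    rw [hsucc, pow_mul, ih]
    set C := Cop k m with hC
    set E := Dmap k ^ 2 ^ (m + 1) * Pmap k with hE
    have expand : (1 + C + E) ^ 2
        = 1 + (C + C) + (E + E) + C * C + (C * E + E * C) + E * E := by noncomm_ring
    have heven : (2 : ℕ) ^ (m + 1) % 2 = 0 := by
      have : 2 ^ (m + 1) = 2 * 2 ^ m := by ring
      omega
    have hexp : 2 ^ (m + 1) + (2 ^ (m + 2) - 1) = 2 ^ (m + 2) + (2 ^ (m + 1) - 1) := by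
      have h1 : 2 ^ (m + 1) = 2 * 2 ^ m := by ring
      have h2 : 2 ^ (m + 2) = 2 * 2 ^ (m + 1) := by ring
      omega
    have hCE : C * E + E * C = Dmap k ^ (2 ^ (m + 2) - 1) := by
      have e1 : C * E = Dmap k ^ 2 ^ (m + 1) * (C * Pmap k) := by
        rw [hE, ← mul_assoc, ← (commute_D_Cop (2 ^ (m + 1)) m).eq, mul_assoc]
      have e2 : E * C = Dmap k ^ 2 ^ (m + 1) * (C * Pmap k) + Dmap k ^ (2 ^ (m + 2) - 1) := by
        rw [hE, mul_assoc, P_mul_Cop, mul_add, ← pow_add, ← hC]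
        congr 2
        have h1 : 2 ^ (m + 1) = 2 * 2 ^ m := by ring
        have h2 : 2 ^ (m + 2) = 2 * 2 ^ (m + 1) := by ring
        omega
      rw [e1, e2, ← add_assoc, addSelf, zero_add]
    have hEE : E * E = Dmap k ^ 2 ^ (m + 2) * Pmap k := by
      rw [hE, mul_assoc, ← mul_assoc (Pmap k), P_mul_Dpow_even heven,
        mul_assoc, P_idem, ← mul_assoc, ← pow_add]
      congr 2
      have h2 : 2 ^ (m + 2) = 2 * 2 ^ (m + 1) := by ring
      omega
    rw [expand, addSelf C, addSelf E, hCE, hEE, Cop_succ, ← sq]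
    abel

end Aux


/-- If `m ≥ 0` and `2^(m+1) ≤ k`, then
`t^(2^m)(e_{2^(m+1)}) = Σ_{i=0}^{m+1} e_{2^i} = e₁ + e₂ + e₄ + ⋯ + e_{2^(m+1)}`. -/
theorem tpow_apply_eVec_pow_two (k m : ℕ) (hk : 1 ≤ k) (hm : 2 ^ (m + 1) ≤ k) :
    (tEnd k ^ 2 ^ m) (eVec k (2 ^ (m + 1))) =
      ∑ i ∈ Finset.range (m + 2), eVec k (2 ^ i) := by
  rw [Aux.tpow_eq, LinearMap.add_apply, LinearMap.add_apply, Module.End.one_apply,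
    Module.End.mul_apply]
  have h1 : Aux.Cop k m (eVec k (2 ^ (m + 1)))
      = ∑ i ∈ Finset.range (m + 1), eVec k (2 ^ i) := by
    rw [Aux.Cop_eq_sum, LinearMap.sum_apply]
    refine Finset.sum_congr rfl fun j hj => ?_
    rw [Aux.Dpow_eVec _ hm]
    have hj' : j ≤ m := Nat.lt_succ_iff.mp (Finset.mem_range.mp hj)
    have hle : (2 : ℕ) ^ j ≤ 2 ^ (m + 1) :=
      Nat.pow_le_pow_right (by norm_num) (by omega)
    rw [Nat.sub_sub_self hle]
  have h2 : (Aux.Dmap k ^ 2 ^ (m + 1)) (Aux.Pmap k (eVec k (2 ^ (m + 1)))) = 0 := by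
    rw [Aux.P_eVec]
    split
    · rw [Aux.Dpow_eVec _ hm, Nat.sub_self, Aux.eVec_zero]
    · rw [map_zero]
  rw [h1, h2, add_zero]
  conv_rhs => rw [Finset.sum_range_succ]
  rw [add_comm]
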